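/- Let G be a finite group, H ≤ G a subgroup containing some Sylow p-subgroup S of G. Then H is pronormal in G if and only if for every g ∈ N_G(S), the subgroups H and H^g are conjugate in ⟨H, H^g⟩. -/

import Mathlib

open Pointwise

/-- The conjugate subgroup `H^g = g H g⁻¹` (conjugation by `g`). -/
def conjSub {G : Type*} [Group G] (g : G) (H : Subgroup G) : Subgroup G :=
  H.map (MulAut.conj g).toMonoidHom

/-- A subgroup `H` of `G` is pronormal in `G` if for every `g ∈ G` the subgroups `H` and
`H^g` are conjugate by an element of `⟨H, H^g⟩`. -/
def IsPronormal {G : Type*} [Group G] (H : Subgroup G) : Prop :=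
  ∀ g : G, ∃ x ∈ H ⊔ conjSub g H, conjSub x H = conjSub g H

lemma conjSub_eq_smul {G : Type*} [Group G] (g : G) (H : Subgroup G) :
    conjSub g H = MulAut.conj g • H := by
  rw [Subgroup.pointwise_smul_def]; rfl

lemma conjSub_mul {G : Type*} [Group G] (a b : G) (H : Subgroup G) :
    conjSub (a * b) H = conjSub a (conjSub b H) := by
  simp [conjSub_eq_smul, map_mul, mul_smul]

lemma conjSub_mono {G : Type*} [Group G] (g : G) {H K : Subgroup G} (h : H ≤ K) :
    conjSub g H ≤ conjSub g K := Subgroup.map_mono h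

/-- If `H` contains a Sylow `p`-subgroup `S` of the finite group `G`, then `H`
is pronormal in `G` iff for every `g ∈ N_G(S)`, `H` and `H^g` are conjugate in `⟨H, H^g⟩`. -/
theorem stmt8 {G : Type*} [Group G] [Finite G] {p : ℕ} [Fact p.Prime]
    (H : Subgroup G) (S : Sylow p G) (hS : (S : Subgroup G) ≤ H) :
    IsPronormal H ↔
      ∀ g ∈ Subgroup.normalizer ((S : Subgroup G) : Set G),
        ∃ x ∈ H ⊔ conjSub g H, conjSub x H = conjSub g H := by
  constructor
  · exact fun h g _ => h g
  · intro hyp g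
    set K := H ⊔ conjSub g H with hK
    have hSK : (S : Subgroup G) ≤ K := hS.trans le_sup_left
    have hgSK : ((g • S : Sylow p G) : Subgroup G) ≤ K := by
      rw [Sylow.coe_subgroup_smul, ← conjSub_eq_smul]
      exact (conjSub_mono g hS).trans le_sup_right
    obtain ⟨c, hc⟩ := MulAction.exists_smul_eq K ((g • S).subtype hgSK) (S.subtype hSK)
    rw [Sylow.smul_subtype] at hc
    have hc' : (c : G) • (g • S) = S := by
      apply Sylow.ext
      have := congrArg (fun P : Sylow p K => (P : Subgroup K)) hc
      simp only [Sylow.coe_subtype] at this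
      have h2 := Subgroup.subgroupOf_inj.mp this
      rwa [inf_of_le_left (Sylow.smul_le hgSK c), inf_of_le_left hSK] at h2
    have hn : (c : G) * g ∈ Subgroup.normalizer ((S : Subgroup G) : Set G) := by
      exact Sylow.smul_eq_iff_mem_normalizer.mp (by rw [mul_smul, hc'])
    obtain ⟨x, hxmem, hx⟩ := hyp _ hn
    have hcgH : conjSub ((c : G) * g) H ≤ K := by
      rw [conjSub_mul, conjSub_eq_smul (c : G)]
      exact Subgroup.conj_smul_le_of_le le_sup_right c
    have hxK : x ∈ K := by
      refine sup_le le_sup_left hcgH hxmem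
    refine ⟨(c : G)⁻¹ * x, ?_, ?_⟩
    · exact K.mul_mem (K.inv_mem c.2) hxK
    · rw [conjSub_mul, hx, ← conjSub_mul, inv_mul_cancel_left]
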